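/- Let a = (a_0, …, a_{2m}) be a distinguished type-C u-symbol. If [k,l] is a staircase of a whose bottom k is even, then k+1 and l−1 are isolated points of a and they are the only isolated points in [k,l]. If [k,l] is a staircase of a whose bottom k is odd, then [k,l] contains no isolated points of a. -/
import Mathlib


open scoped Classical

/-- The map `i` from type-C u-symbols to type-C symbols: the `j`-th entry is
`a j - ⌈j/2⌉`. -/
def mapC (a : ℕ → ℕ) : ℕ → ℕ := fun j => a j - (j + 1) / 2

/-- A type-C u-symbol of rank `n` (with `2m+1` entries, indexed `0,…,2m`). -/
def IsUSymC (n m : ℕ) (a : ℕ → ℕ) : Prop :=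
  1 ≤ a 1 ∧ (∀ i, i + 2 ≤ 2 * m → a i + 2 ≤ a (i + 2)) ∧
    (∑ j ∈ Finset.range (2 * m + 1), a j) = n + 2 * m ^ 2 + m

/-- The u-symbol `a` is distinguished: its entries are nondecreasing. -/
def DistC (m : ℕ) (a : ℕ → ℕ) : Prop := ∀ i, i + 1 ≤ 2 * m → a i ≤ a (i + 1)

/-- `k` is an isolated point of the u-symbol `a`: the `k`-th entry of `i(a)` differs
from every other entry of `i(a)`. -/
def IsIsolC (m : ℕ) (a : ℕ → ℕ) (k : ℕ) : Prop :=
  k ≤ 2 * m ∧ ∀ l ≤ 2 * m, l ≠ k → mapC a l ≠ mapC a k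

/-- `[k,l]` is a ladder of `a`: the entries `a k, …, a l` are `c, c+1, …, c+l-k`,
with `a (k-1) < c - 1` if `k > 0` and `a (l+1) > c + (l-k) + 1` if `l < 2m`. -/
def IsLadderC (m : ℕ) (a : ℕ → ℕ) (k l : ℕ) : Prop :=
  k ≤ l ∧ l ≤ 2 * m ∧ (∀ j, k ≤ j → j ≤ l → a j = a k + (j - k)) ∧
    (0 < k → a (k - 1) + 1 < a k) ∧ (l < 2 * m → a l + 1 < a (l + 1))

/-- `[k,l]` is a staircase of `a`: `l-k+1` is even and the entries `a k, …, a l` are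
`c, c, c+2, c+2, …, c+l-k-1, c+l-k-1`, with `a (k-2) < c - 2` if `k > 1` and
`a (l+2) > c + (l-k) + 1` if `l < 2m - 1`. -/
def IsStairC (m : ℕ) (a : ℕ → ℕ) (k l : ℕ) : Prop :=
  k ≤ l ∧ l ≤ 2 * m ∧ (l - k) % 2 = 1 ∧
    (∀ j, k ≤ j → j ≤ l → a j = a k + 2 * ((j - k) / 2)) ∧
    (1 < k → a (k - 2) + 2 < a k) ∧ (l + 2 ≤ 2 * m → a l + 2 < a (l + 2))

/-- A part is a ladder or a staircase. -/
def IsPartC (m : ℕ) (a : ℕ → ℕ) (k l : ℕ) : Prop :=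
  IsLadderC m a k l ∨ IsStairC m a k l

/-- For a staircase `[k,l]` of a distinguished type-C u-symbol: if the bottom `k`
is even then `k+1` and `l-1` are the only isolated points in `[k,l]`; if the
bottom `k` is odd then `[k,l]` contains no isolated points. -/
theorem stmt5 (n m : ℕ) (hn : 1 ≤ n) (hm : 1 ≤ m) (a : ℕ → ℕ)
    (ha : IsUSymC n m a) (hdist : DistC m a)
    (k l : ℕ) (hs : IsStairC m a k l) :
    (Even k → IsIsolC m a (k + 1) ∧ IsIsolC m a (l - 1) ∧
      ∀ j, k ≤ j → j ≤ l → IsIsolC m a j → j = k + 1 ∨ j = l - 1) ∧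
    (Odd k → ∀ j, k ≤ j → j ≤ l → ¬ IsIsolC m a j) := by
  obtain ⟨ha1, hstep, -⟩ := ha
  obtain ⟨hkl, hl2m, hpar, hform, hbot, htop⟩ := hs
  -- every entry is at least its index
  have hone : ∀ j, j ≤ 2 * m → j ≤ a j := by
    intro j
    induction j using Nat.strong_induction_on with
    | _ j ih =>
      match j with
      | 0 => intro _; exact Nat.zero_le _
      | 1 => intro _; exact ha1
      | (t+2) =>
        intro h
        have h1 := ih t (by omega) (by omega)
        have h2 := hstep t (by omega)
        omega
  -- chain: mapC increases along even gaps
  have hchain : ∀ t p, p + 2 * t ≤ 2 * m → mapC a p + t ≤ mapC a (p + 2 * t) := by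
    intro t
    induction t with
    | zero => intro p _; simp
    | succ s ih =>
      intro p h
      have h1 := ih p (by omega)
      have h2 : mapC a (p + 2 * s) + 1 ≤ mapC a (p + 2 * s + 2) := by
        have e1 := hstep (p + 2 * s) (by omega)
        have e2 := hone (p + 2 * s) (by omega)
        have e3 := hone (p + 2 * s + 2) (by omega)
        simp only [mapC]
        omega
      have e : p + 2 * (s + 1) = p + 2 * s + 2 := by ring
      rw [e]
      omega
  -- equal mapC values can only be at distance 1, or 3 with special shape
  have hfar : ∀ p q, p < q → q ≤ 2 * m → mapC a p = mapC a q →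
      q = p + 1 ∨ (q = p + 3 ∧ p % 2 = 0 ∧ a (p + 1) = a p) := by
    intro p q hpq hq heq
    obtain ⟨t, ht⟩ : ∃ t, q = p + 2 * t + 1 ∨ q = p + 2 * t + 2 := ⟨(q - p - 1) / 2, by omega⟩
    rcases ht with ht | ht
    · subst ht
      rcases t with _ | s
      · omega
      · have hA := hchain s (p + 3) (by omega)
        have e : p + 3 + 2 * s = p + 2 * (s + 1) + 1 := by ring
        rw [e] at hA
        have hd := hdist p (by omega)
        have hs1 := hstep (p + 1) (by omega)
        have e2 : p + 1 + 2 = p + 3 := by omega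
        rw [e2] at hs1
        have o1 := hone p (by omega)
        have o2 := hone (p + 1) (by omega)
        have o3 := hone (p + 3) (by omega)
        simp only [mapC] at hA heq
        omega
    · subst ht
      have hA := hchain (t + 1) p (by omega)
      have e : p + 2 * (t + 1) = p + 2 * t + 2 := by ring
      rw [e] at hA
      omega
  -- values inside the staircase
  have hak1 : a (k + 1) = a k := by
    have := hform (k + 1) (by omega) (by omega)
    omega
  constructor
  · -- even bottom
    intro hke
    have hk2 : k % 2 = 0 := Nat.even_iff.mp hke
    have hlodd : l % 2 = 1 := by omega
    have hal1 : a (l - 1) = a k + (l - 1 - k) := by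
      have := hform (l - 1) (by omega) (by omega)
      omega
    have hal : a l = a k + (l - 1 - k) := by
      have := hform l (by omega) (by omega)
      omega
    have hiso1 : IsIsolC m a (k + 1) := by
      refine ⟨by omega, fun t ht htne heq => ?_⟩
      rcases Nat.lt_or_ge t (k + 1) with hlt | hge
      · rcases hfar t (k + 1) hlt (by omega) heq with h1 | ⟨h1, h2, h3⟩
        · -- t = k
          rw [show t = k by omega] at heq
          have o1 := hone k (by omega)
          have o2 := hone (k + 1) (by omega)
          simp only [mapC] at heq
          omega
        · -- t = k - 2
          have hb := hbot (by omega)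
          have h8 : k - 2 = t := by omega
          rw [h8] at hb
          have o1 := hone t (by omega)
          have o2 := hone (k + 1) (by omega)
          simp only [mapC] at heq
          omega
      · have hlt : k + 1 < t := by omega
        rcases hfar (k + 1) t hlt ht heq.symm with h1 | ⟨h1, h2, h3⟩
        · -- t = k + 2
          have h4 : t = k + 2 := by omega
          subst h4
          have hs1 := hstep k (by omega)
          have o1 := hone (k + 1) (by omega)
          have o2 := hone (k + 2) (by omega)
          simp only [mapC] at heq
          omega
        · omega
    have hiso2 : IsIsolC m a (l - 1) := by
      refine ⟨by omega, fun t ht htne heq => ?_⟩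
      rcases Nat.lt_or_ge t (l - 1) with hlt | hge
      · rcases hfar t (l - 1) hlt (by omega) heq with h1 | ⟨h1, h2, h3⟩
        · -- t = l - 2
          rcases Nat.lt_or_ge t k with htk | htk
          · -- then l - 1 = k, t = k - 1
            have hlk : l = k + 1 := by omega
            have h4 : t = k - 1 := by omega
            subst h4
            have hs1 := hstep (k - 1) (by omega)
            have e : k - 1 + 2 = k + 1 := by omega
            rw [e] at hs1
            rw [hlk] at heq
            simp only [Nat.add_sub_cancel] at heq
            have o1 := hone (k - 1) (by omega)
            have o2 := hone (k + 1) (by omega)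
            simp only [mapC] at heq
            omega
          · have h4 : t = l - 2 := by omega
            subst h4
            have e1 := hform (l - 2) (by omega) (by omega)
            have o1 := hone (l - 2) (by omega)
            have o2 := hone (l - 1) (by omega)
            simp only [mapC] at heq
            omega
        · -- distance 3 below: parity contradiction
          omega
      · have hlt : l - 1 < t := by omega
        rcases hfar (l - 1) t hlt ht heq.symm with h1 | ⟨h1, h2, h3⟩
        · -- t = l
          rw [show t = l by omega] at heq
          have o1 := hone l (by omega)
          have o2 := hone (l - 1) (by omega)
          simp only [mapC] at heq
          omega
        · -- t = l + 2
          have h4 : t = l + 2 := by omega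
          subst h4
          have ht2 := htop (by omega)
          have o1 := hone (l + 2) (by omega)
          have o2 := hone (l - 1) (by omega)
          simp only [mapC] at heq
          omega
    refine ⟨hiso1, hiso2, ?_⟩
    intro j hkj hjl hiso
    obtain ⟨-, hj⟩ := hiso
    rcases Nat.even_or_odd (j - k) with he | ho
    · have he' : (j - k) % 2 = 0 := Nat.even_iff.mp he
      rcases eq_or_ne j (l - 1) with rfl | hne
      · right; rfl
      · exfalso
        refine hj (j + 3) (by omega) (by omega) ?_
        have e1 := hform j hkj (by omega)
        have e2 := hform (j + 3) (by omega) (by omega)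
        have o1 := hone j (by omega)
        have o2 := hone (j + 3) (by omega)
        simp only [mapC]
        omega
    · have ho' : (j - k) % 2 = 1 := Nat.odd_iff.mp ho
      rcases eq_or_ne j (k + 1) with rfl | hne
      · left; rfl
      · exfalso
        refine hj (j - 3) (by omega) (by omega) ?_
        have e1 := hform j hkj hjl
        have e2 := hform (j - 3) (by omega) (by omega)
        have o1 := hone j (by omega)
        have o2 := hone (j - 3) (by omega)
        simp only [mapC]
        omega
  · -- odd bottom
    intro hko
    have hk2 : k % 2 = 1 := Nat.odd_iff.mp hko
    intro j hkj hjl hiso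
    obtain ⟨-, hj⟩ := hiso
    rcases Nat.even_or_odd (j - k) with he | ho
    · have he' : (j - k) % 2 = 0 := Nat.even_iff.mp he
      refine hj (j + 1) (by omega) (by omega) ?_
      have e1 := hform j hkj (by omega)
      have e2 := hform (j + 1) (by omega) (by omega)
      have o1 := hone j (by omega)
      have o2 := hone (j + 1) (by omega)
      simp only [mapC]
      omega
    · have ho' : (j - k) % 2 = 1 := Nat.odd_iff.mp ho
      refine hj (j - 1) (by omega) (by omega) ?_
      have e1 := hform j hkj hjl
      have e2 := hform (j - 1) (by omega) (by omega)
      have o1 := hone j (by omega)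
      have o2 := hone (j - 1) (by omega)
      simp only [mapC]
      omega
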